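/- Set c₀ := r_min − V_∞/(2 μ_min) and c₁ := 1/μ_max − V_∞/(2 μ_min). If V_∞ < 2 μ_min · min(1/μ_max, r_min), then c₀ > 0, c₁ > 0, and for every u ∈ L²(Ω; ℝ) and every J ∈ L²(Ω; ℝ³) one has ∫_Ω μ(x)⁻¹ |J(x)|² dx + ∫_Ω r(x) u(x)² dx − ∫_Ω μ(x)⁻¹ (𝐯(x) · J(x)) u(x) dx ≥ c₀ ‖u‖²_{L²(Ω)} + c₁ ‖J‖²_{L²(Ω)}. -/

import Mathlib

set_option maxHeartbeats 4000000


open MeasureTheory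

/-- Coercivity estimate (via Young's inequality) for the advection-diffusion-reaction
bilinear form `a` on the kernel, used in the well-posedness proof of the DMH weak
formulation: with c₀ := r_min − V_∞/(2 μ_min) and c₁ := 1/μ_max − V_∞/(2 μ_min),
if V_∞ < 2 μ_min min(1/μ_max, r_min) then c₀ > 0, c₁ > 0 and
∫ μ⁻¹|J|² + ∫ r u² − ∫ μ⁻¹ (v·J) u ≥ c₀ ‖u‖²_{L²} + c₁ ‖J‖²_{L²}. -/
theorem dmh_coercivity_estimate
    (Ω : Set (EuclideanSpace ℝ (Fin 3))) (hΩ : MeasurableSet Ω)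
    (μ r : EuclideanSpace ℝ (Fin 3) → ℝ)
    (v : EuclideanSpace ℝ (Fin 3) → EuclideanSpace ℝ (Fin 3))
    (hμmeas : Measurable μ) (hrmeas : Measurable r) (hvmeas : Measurable v)
    (μmin μmax rmin Vinf : ℝ)
    (hμmin : 0 < μmin) (hμmax : μmin ≤ μmax) (hrmin : 0 < rmin)
    (hμ : ∀ᵐ x ∂(volume.restrict Ω), μmin ≤ μ x ∧ μ x ≤ μmax)
    (hr : ∀ᵐ x ∂(volume.restrict Ω), rmin ≤ r x)
    (hv : ∀ᵐ x ∂(volume.restrict Ω), ‖v x‖ ≤ Vinf)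
    (hVinf : Vinf < 2 * μmin * min (1 / μmax) rmin)
    (u : EuclideanSpace ℝ (Fin 3) → ℝ)
    (J : EuclideanSpace ℝ (Fin 3) → EuclideanSpace ℝ (Fin 3))
    (hu : MemLp u 2 (volume.restrict Ω))
    (hJ : MemLp J 2 (volume.restrict Ω))
    (hru : Integrable (fun x => r x * u x ^ 2) (volume.restrict Ω)) :
    0 < rmin - Vinf / (2 * μmin) ∧
    0 < 1 / μmax - Vinf / (2 * μmin) ∧
    (∫ x in Ω, (μ x)⁻¹ * ‖J x‖ ^ 2) + (∫ x in Ω, r x * u x ^ 2)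
        - (∫ x in Ω, (μ x)⁻¹ * (inner ℝ (v x) (J x) : ℝ) * u x)
      ≥ (rmin - Vinf / (2 * μmin)) * (∫ x in Ω, u x ^ 2)
        + (1 / μmax - Vinf / (2 * μmin)) * (∫ x in Ω, ‖J x‖ ^ 2) := by
  have hμmax0 : 0 < μmax := lt_of_lt_of_le hμmin hμmax
  have h2μ : (0:ℝ) < 2 * μmin := by linarith
  have hc₀ : 0 < rmin - Vinf / (2 * μmin) := by
    rw [sub_pos, div_lt_iff₀ h2μ]
    calc Vinf < 2 * μmin * min (1 / μmax) rmin := hVinf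
      _ ≤ 2 * μmin * rmin := mul_le_mul_of_nonneg_left (min_le_right _ _) (le_of_lt h2μ)
      _ = rmin * (2 * μmin) := by ring
  have hc₁ : 0 < 1 / μmax - Vinf / (2 * μmin) := by
    rw [sub_pos, div_lt_iff₀ h2μ]
    calc Vinf < 2 * μmin * min (1 / μmax) rmin := hVinf
      _ ≤ 2 * μmin * (1 / μmax) := mul_le_mul_of_nonneg_left (min_le_left _ _) (le_of_lt h2μ)
      _ = 1 / μmax * (2 * μmin) := by ring
  refine ⟨hc₀, hc₁, ?_⟩
  set ν := volume.restrict Ω with hν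
  set c₀ := rmin - Vinf / (2 * μmin) with hc0def
  set c₁ := 1 / μmax - Vinf / (2 * μmin) with hc1def
  -- basic integrabilities
  have hu2 : Integrable (fun x => u x ^ 2) ν :=
    (memLp_two_iff_integrable_sq hu.aestronglyMeasurable).mp hu
  have hJ2 : Integrable (fun x => ‖J x‖ ^ 2) ν :=
    (memLp_two_iff_integrable_sq_norm hJ.aestronglyMeasurable).mp hJ
  have hμinv : AEStronglyMeasurable (fun x => (μ x)⁻¹) ν :=
    (hμmeas.inv).aestronglyMeasurable
  have hJm : AEStronglyMeasurable J ν := hJ.aestronglyMeasurable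
  have hum : AEStronglyMeasurable u ν := hu.aestronglyMeasurable
  -- integrability of μ⁻¹‖J‖²
  have hg1 : Integrable (fun x => (μ x)⁻¹ * ‖J x‖ ^ 2) ν := by
    refine Integrable.mono' (hJ2.const_mul μmin⁻¹) ?_ ?_
    · exact hμinv.mul ((hJm.norm.pow 2))
    · filter_upwards [hμ] with x ⟨h1, h2⟩
      have hμx : 0 < μ x := lt_of_lt_of_le hμmin h1
      have : (μ x)⁻¹ ≤ μmin⁻¹ := by
        exact inv_anti₀ hμmin h1
      have hnn : 0 ≤ (μ x)⁻¹ * ‖J x‖ ^ 2 := by positivity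
      rw [Real.norm_of_nonneg hnn]
      exact mul_le_mul_of_nonneg_right this (by positivity : (0:ℝ) ≤ ‖J x‖ ^ 2)
  -- integrability of cross term
  have hg3 : Integrable (fun x => (μ x)⁻¹ * (inner ℝ (v x) (J x) : ℝ) * u x) ν := by
    refine Integrable.mono'
      ((hJ2.add hu2).const_mul (μmin⁻¹ * |Vinf| / 2)) ?_ ?_
    · exact (hμinv.mul ((hvmeas.aestronglyMeasurable.inner hJm))).mul hum
    · filter_upwards [hμ, hv] with x ⟨h1, h2⟩ hvx
      have hμx : 0 < μ x := lt_of_lt_of_le hμmin h1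
      have hinv : (μ x)⁻¹ ≤ μmin⁻¹ := inv_anti₀ hμmin h1
      have hinv0 : 0 ≤ (μ x)⁻¹ := by positivity
      have hcs : |(inner ℝ (v x) (J x) : ℝ)| ≤ ‖v x‖ * ‖J x‖ := abs_real_inner_le_norm _ _
      have hV : ‖v x‖ * ‖J x‖ ≤ |Vinf| * ‖J x‖ := by
        have := le_trans hvx (le_abs_self Vinf)
        exact mul_le_mul_of_nonneg_right this (norm_nonneg _)
      calc ‖(μ x)⁻¹ * (inner ℝ (v x) (J x) : ℝ) * u x‖
          = (μ x)⁻¹ * |(inner ℝ (v x) (J x) : ℝ)| * |u x| := by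
            rw [Real.norm_eq_abs, abs_mul, abs_mul, abs_of_nonneg hinv0]
        _ ≤ μmin⁻¹ * (|Vinf| * ‖J x‖) * |u x| := by
            apply mul_le_mul_of_nonneg_right _ (abs_nonneg _)
            exact mul_le_mul hinv (le_trans hcs hV) (abs_nonneg _) (by positivity)
        _ ≤ μmin⁻¹ * |Vinf| / 2 * (‖J x‖ ^ 2 + u x ^ 2) := by
            have h := sq_nonneg (‖J x‖ - |u x|)
            have hm : 0 ≤ μmin⁻¹ * |Vinf| := by positivity
            have habs : |u x| ^ 2 = u x ^ 2 := sq_abs _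
            nlinarith [abs_nonneg (u x), norm_nonneg (J x)]
  -- pointwise inequality
  have hpt : ∀ᵐ x ∂ν, c₀ * u x ^ 2 + c₁ * ‖J x‖ ^ 2 ≤
      (μ x)⁻¹ * ‖J x‖ ^ 2 + r x * u x ^ 2 - (μ x)⁻¹ * (inner ℝ (v x) (J x) : ℝ) * u x := by
    filter_upwards [hμ, hr, hv] with x ⟨h1, h2⟩ hrx hvx
    have hμx : 0 < μ x := lt_of_lt_of_le hμmin h1
    have hV0 : 0 ≤ Vinf := le_trans (norm_nonneg _) hvx
    have hinv1 : μmax⁻¹ ≤ (μ x)⁻¹ := inv_anti₀ hμx h2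
    have hinv2 : (μ x)⁻¹ ≤ μmin⁻¹ := inv_anti₀ hμmin h1
    have hcs : (inner ℝ (v x) (J x) : ℝ) * u x ≤ Vinf * (‖J x‖ * |u x|) := by
      calc (inner ℝ (v x) (J x) : ℝ) * u x ≤ |(inner ℝ (v x) (J x) : ℝ) * u x| := le_abs_self _
        _ = |(inner ℝ (v x) (J x) : ℝ)| * |u x| := abs_mul _ _
        _ ≤ (‖v x‖ * ‖J x‖) * |u x| :=
            mul_le_mul_of_nonneg_right (abs_real_inner_le_norm _ _) (abs_nonneg _)
        _ ≤ (Vinf * ‖J x‖) * |u x| :=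
            mul_le_mul_of_nonneg_right
              (mul_le_mul_of_nonneg_right hvx (norm_nonneg _)) (abs_nonneg _)
        _ = Vinf * (‖J x‖ * |u x|) := by ring
    have hcross : (μ x)⁻¹ * (inner ℝ (v x) (J x) : ℝ) * u x
        ≤ μmin⁻¹ * (Vinf * (‖J x‖ * |u x|)) := by
      have hnn : 0 ≤ Vinf * (‖J x‖ * |u x|) := by positivity
      calc (μ x)⁻¹ * (inner ℝ (v x) (J x) : ℝ) * u x
          = (μ x)⁻¹ * ((inner ℝ (v x) (J x) : ℝ) * u x) := by ring
        _ ≤ (μ x)⁻¹ * (Vinf * (‖J x‖ * |u x|)) :=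
            mul_le_mul_of_nonneg_left hcs (le_of_lt (inv_pos.mpr hμx))
        _ ≤ μmin⁻¹ * (Vinf * (‖J x‖ * |u x|)) :=
            mul_le_mul_of_nonneg_right hinv2 hnn
    have hd1 : (μ x)⁻¹ * ‖J x‖ ^ 2 ≥ μmax⁻¹ * ‖J x‖ ^ 2 :=
      mul_le_mul_of_nonneg_right hinv1 (by positivity)
    have hd2 : r x * u x ^ 2 ≥ rmin * u x ^ 2 :=
      mul_le_mul_of_nonneg_right hrx (sq_nonneg _)
    have hyoung : ‖J x‖ * |u x| ≤ (‖J x‖ ^ 2 + u x ^ 2) / 2 := by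
      nlinarith [sq_nonneg (‖J x‖ - |u x|), sq_abs (u x)]
    have hVμ : 0 ≤ Vinf * μmin⁻¹ := by positivity
    have hc0' : c₀ = rmin - Vinf / (2 * μmin) := hc0def
    have hc1' : c₁ = 1 / μmax - Vinf / (2 * μmin) := hc1def
    have hdivs : Vinf / (2 * μmin) = Vinf * μmin⁻¹ / 2 := by
      ring
    have h1max : (1:ℝ) / μmax = μmax⁻¹ := one_div _
    have hcross2 : (μ x)⁻¹ * (inner ℝ (v x) (J x) : ℝ) * u x
        ≤ Vinf * μmin⁻¹ * ((‖J x‖ ^ 2 + u x ^ 2) / 2) := by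
      refine le_trans hcross ?_
      have := mul_le_mul_of_nonneg_left hyoung hVμ
      calc μmin⁻¹ * (Vinf * (‖J x‖ * |u x|)) = Vinf * μmin⁻¹ * (‖J x‖ * |u x|) := by ring
        _ ≤ Vinf * μmin⁻¹ * ((‖J x‖ ^ 2 + u x ^ 2) / 2) := this
    rw [hc0', hc1', hdivs, h1max]
    nlinarith [hd1, hd2, hcross2]
  -- combine integrals
  have hrhs : Integrable (fun x => c₀ * u x ^ 2 + c₁ * ‖J x‖ ^ 2) ν :=
    (hu2.const_mul c₀).add (hJ2.const_mul c₁)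
  have hlhs : Integrable (fun x => (μ x)⁻¹ * ‖J x‖ ^ 2 + r x * u x ^ 2
      - (μ x)⁻¹ * (inner ℝ (v x) (J x) : ℝ) * u x) ν := (hg1.add hru).sub hg3
  have key := integral_mono_ae hrhs hlhs hpt
  have hsum : Integrable (fun x => (μ x)⁻¹ * ‖J x‖ ^ 2 + r x * u x ^ 2) ν := hg1.add hru
  rw [integral_sub hsum hg3, integral_add hg1 hru,
    integral_add (hu2.const_mul c₀) (hJ2.const_mul c₁),
    integral_const_mul c₀, integral_const_mul c₁] at key
  exact key
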